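/- Consider the greedy algorithm on the partition matroid N_m on R = {r^1,...,r^{2m−1}} whose parts are {r^1,...,r^m} and the m−1 singletons {r^{m+1}},...,{r^{2m−1}}, with uniformly random arrival order. Then the algorithm is (1 + 1/m) intersection-competitive, i.e., |OPT| ≤ (1+1/m)·E[|ALG ∩ OPT|], and it is at least m ordinal-competitive, since |OPT ∩ R^1| / E[|ALG ∩ R^1|] = m. -/

import Mathlib

open Finset

/-- Parts of the matroid `N_m` on `2m−1` elements: one part `{r^1,…,r^m}` and
`m−1` singleton parts. -/
def npart (m : ℕ) {n : ℕ} (i : Fin n) : ℕ := if (i : ℕ) < m then 0 else (i : ℕ)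

/-- Independence: at most one element per part. -/
def nIndep (m : ℕ) {n : ℕ} (S : Finset (Fin n)) : Prop :=
  ∀ i ∈ S, ∀ j ∈ S, npart m i = npart m j → i = j

instance (m n : ℕ) (S : Finset (Fin n)) : Decidable (nIndep m S) :=
  inferInstanceAs (Decidable (∀ i ∈ S, ∀ j ∈ S, npart m i = npart m j → i = j))

/-- The greedy online algorithm on arrival order `σ`. -/
def greedyALG (m : ℕ) {n : ℕ} (σ : Equiv.Perm (Fin n)) : Finset (Fin n) :=
  (List.ofFn fun t => σ t).foldl
    (fun S r => if nIndep m (insert r S) then insert r S else S) ∅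

/-- The top `k` elements `R^k` (smaller index = higher value). -/
def topk (n k : ℕ) : Finset (Fin n) := Finset.univ.filter fun i => (i : ℕ) < k

-- auxiliary
def gstep (m : ℕ) {n : ℕ} : Finset (Fin n) → Fin n → Finset (Fin n) :=
  fun S r => if nIndep m (insert r S) then insert r S else S

def gP (m : ℕ) {n : ℕ} (x : Fin n) : Bool := decide ((x : ℕ) < m)

def bigs (m : ℕ) {n : ℕ} (l : List (Fin n)) : Finset (Fin n) :=
  l.toFinset.filter fun x => m ≤ (x : ℕ)

def fsm (m : ℕ) {n : ℕ} (l : List (Fin n)) : Finset (Fin n) :=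
  (l.find? (gP m)).elim ∅ fun y => {y}

lemma mem_bigs {m n : ℕ} {l : List (Fin n)} {x : Fin n} :
    x ∈ bigs m l ↔ x ∈ l ∧ m ≤ (x : ℕ) := by
  simp [bigs]

lemma nIndep_of {m n : ℕ} (hm : 1 ≤ m) {S : Finset (Fin n)}
    (h : ∀ x ∈ S, ∀ y ∈ S, (x : ℕ) < m → (y : ℕ) < m → x = y) : nIndep m S := by
  intro i hi j hj hp
  unfold npart at hp
  rcases Nat.lt_or_ge (i : ℕ) m with h1 | h1 <;> rcases Nat.lt_or_ge (j : ℕ) m with h2 | h2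
  · exact h i hi j hj h1 h2
  · rw [if_pos h1, if_neg (not_lt.2 h2)] at hp; omega
  · rw [if_neg (not_lt.2 h1), if_pos h2] at hp; omega
  · rw [if_neg (not_lt.2 h1), if_neg (not_lt.2 h2)] at hp; exact Fin.ext hp

lemma nIndep_shape {m n : ℕ} (hm : 1 ≤ m) {S : Finset (Fin n)} {w : Fin n}
    (h : ∀ x ∈ S, (x : ℕ) < m → x = w) : nIndep m S :=
  nIndep_of hm fun x hx y hy hx' hy' => (h x hx hx').trans (h y hy hy').symm

lemma small_mem {m n : ℕ} {p : List (Fin n)} {x : Fin n}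
    (hx : x ∈ bigs m p ∪ fsm m p) (hxm : (x : ℕ) < m) : p.find? (gP m) = some x := by
  rcases Finset.mem_union.1 hx with h | h
  · exact absurd (mem_bigs.1 h).2 (by omega)
  · unfold fsm at h
    cases hfind : p.find? (gP m) with
    | none => rw [hfind] at h; simp at h
    | some y => rw [hfind] at h; simp at h; rw [h]

lemma step_eq {m n : ℕ} (hm : 1 ≤ m) (p : List (Fin n)) (r : Fin n) :
    gstep m (bigs m p ∪ fsm m p) r = bigs m (p ++ [r]) ∪ fsm m (p ++ [r]) := by
  by_cases hr : (r : ℕ) < m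
  · -- r is small
    have hbig : bigs m (p ++ [r]) = bigs m p := by
      ext x
      simp only [mem_bigs, List.mem_append, List.mem_singleton]
      constructor
      · rintro ⟨h1 | rfl, h2⟩
        · exact ⟨h1, h2⟩
        · omega
      · rintro ⟨h1, h2⟩
        exact ⟨Or.inl h1, h2⟩
    cases hfind : p.find? (gP m) with
    | none =>
      have hfsm : fsm m p = ∅ := by simp [fsm, hfind]
      have hfsm' : fsm m (p ++ [r]) = {r} := by
        simp [fsm, List.find?_append, hfind, gP, hr]
      have hind : nIndep m (insert r (bigs m p ∪ fsm m p)) := by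
        apply nIndep_shape hm (w := r)
        intro x hx hxm
        rcases Finset.mem_insert.1 hx with rfl | hx'
        · rfl
        · exact absurd (small_mem hx' hxm) (by simp [hfind])
      rw [gstep, if_pos hind, hbig, hfsm, hfsm']
      rw [Finset.union_empty, Finset.insert_eq, Finset.union_comm]
    | some y =>
      have hy : (y : ℕ) < m := by
        have := List.find?_some hfind; simpa [gP] using this
      have hfsm : fsm m p = {y} := by simp [fsm, hfind]
      have hfsm' : fsm m (p ++ [r]) = {y} := by
        simp [fsm, List.find?_append, hfind]
      by_cases hyr : y = r
      · subst hyr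
        have hrS : y ∈ bigs m p ∪ fsm m p := by
          simp [hfsm]
        have : insert y (bigs m p ∪ fsm m p) = bigs m p ∪ fsm m p :=
          Finset.insert_eq_self.2 hrS
        rw [gstep, this, if_pos, hbig, hfsm, hfsm']
        apply nIndep_shape hm (w := y)
        intro x hx hxm
        have := small_mem hx hxm
        rw [hfind] at this; exact (Option.some_injective _ this).symm ▸ rfl
      · have hnind : ¬ nIndep m (insert r (bigs m p ∪ fsm m p)) := by
          intro hind
          have hyS : y ∈ insert r (bigs m p ∪ fsm m p) := by
            simp [hfsm]
          have hrS : r ∈ insert r (bigs m p ∪ fsm m p) := Finset.mem_insert_self _ _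
          have := hind y hyS r hrS (by unfold npart; rw [if_pos hy, if_pos hr])
          exact hyr this
        rw [gstep, if_neg hnind, hbig, hfsm, hfsm']
  · -- r is big
    have hfsm' : fsm m (p ++ [r]) = fsm m p := by
      have : List.find? (gP m) [r] = none := by
        simp [gP]; omega
      simp [fsm, List.find?_append, this]
    have hbig : bigs m (p ++ [r]) = insert r (bigs m p) := by
      ext x
      simp only [mem_bigs, List.mem_append, List.mem_singleton, Finset.mem_insert]
      constructor
      · rintro ⟨h1 | rfl, h2⟩
        · exact Or.inr ⟨h1, h2⟩
        · exact Or.inl rfl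
      · rintro (rfl | ⟨h1, h2⟩)
        · exact ⟨Or.inr rfl, by omega⟩
        · exact ⟨Or.inl h1, h2⟩
    have hind : nIndep m (insert r (bigs m p ∪ fsm m p)) := by
      apply nIndep_of hm
      intro x hx y hy hxm hym
      have hx' : x ∈ bigs m p ∪ fsm m p := by
        rcases Finset.mem_insert.1 hx with rfl | h
        · omega
        · exact h
      have hy' : y ∈ bigs m p ∪ fsm m p := by
        rcases Finset.mem_insert.1 hy with rfl | h
        · omega
        · exact h
      have := (small_mem hx' hxm).symm.trans (small_mem hy' hym)
      exact Option.some_injective _ this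
    rw [gstep, if_pos hind, hbig, hfsm', Finset.insert_union]

lemma fold_eq {m n : ℕ} (hm : 1 ≤ m) (l p : List (Fin n)) :
    l.foldl (gstep m) (bigs m p ∪ fsm m p) = bigs m (p ++ l) ∪ fsm m (p ++ l) := by
  induction l generalizing p with
  | nil => simp
  | cons r l ih =>
    rw [List.foldl_cons, step_eq hm, ih (p ++ [r])]
    simp

lemma greedy_eq {m n : ℕ} (hm : 1 ≤ m) (σ : Equiv.Perm (Fin n)) :
    greedyALG m σ = bigs m (List.ofFn σ) ∪ fsm m (List.ofFn σ) := by
  have h := fold_eq hm (n := n) (List.ofFn σ) []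
  simp only [List.nil_append] at h
  have h0 : (bigs m ([] : List (Fin n)) ∪ fsm m []) = ∅ := by simp [bigs, fsm]
  rw [h0] at h
  exact h

lemma find?_finRange_zero {m n : ℕ} (hm : 1 ≤ m) (hpos : 0 < n) :
    (List.finRange n).find? (gP m) = some ⟨0, hpos⟩ := by
  cases n with
  | zero => omega
  | succ k =>
    rw [List.finRange_succ, List.find?_cons_of_pos]
    · rfl
    · exact decide_eq_true (by show (0 % (k+1)) < m; rw [Nat.zero_mod]; omega)


/-- Greedy on the partition matroid `N_m` under a uniformly random order is
`(1 + 1/m)` intersection-competitive, i.e. `|OPT| ≤ (1+1/m)·E[|ALG ∩ OPT|]`, but at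
least `m` ordinal-competitive, since `|OPT ∩ R^1| = m · E[|ALG ∩ R^1|]`. Here `OPT` is
greedy's output on the identity (decreasing-value) order. -/
theorem greedy_Nm_intersection_vs_ordinal (m n : ℕ) (hm : 1 ≤ m)
    (hn : n = 2 * m - 1) :
    (((greedyALG m (1 : Equiv.Perm (Fin n))).card : ℝ) ≤
      (1 + 1 / (m : ℝ)) *
        ((∑ σ : Equiv.Perm (Fin n),
            ((greedyALG m σ ∩ greedyALG m (1 : Equiv.Perm (Fin n))).card : ℝ)) /
          (Fintype.card (Equiv.Perm (Fin n)) : ℝ))) ∧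
    (((greedyALG m (1 : Equiv.Perm (Fin n)) ∩ topk n 1).card : ℝ) =
      (m : ℝ) *
        ((∑ σ : Equiv.Perm (Fin n), ((greedyALG m σ ∩ topk n 1).card : ℝ)) /
          (Fintype.card (Equiv.Perm (Fin n)) : ℝ))) := by
  have hpos : 0 < n := by omega
  have hmn : m ≤ n := by omega
  set z0 : Fin n := ⟨0, hpos⟩ with hz0
  set B : Finset (Fin n) := Finset.univ.filter (fun x => m ≤ (x : ℕ)) with hB
  -- every element appears in the arrival list
  have hofFn : ∀ σ : Equiv.Perm (Fin n), ∀ x : Fin n, x ∈ List.ofFn ⇑σ := by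
    intro σ x
    rw [List.mem_ofFn]
    exact ⟨σ.symm x, σ.apply_symm_apply x⟩
  have hbigs : ∀ σ : Equiv.Perm (Fin n), bigs m (List.ofFn ⇑σ) = B := by
    intro σ
    unfold bigs
    congr 1
    ext x
    simp [hofFn σ x]
  -- the winner of the big part
  set w : Equiv.Perm (Fin n) → Fin n :=
    fun σ => ((List.ofFn ⇑σ).find? (gP m)).getD z0 with hwdef
  have hfind : ∀ σ : Equiv.Perm (Fin n),
      (List.ofFn ⇑σ).find? (gP m) = some (w σ) ∧ ((w σ : ℕ) < m) := by
    intro σ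
    have h1 : ((List.ofFn ⇑σ).find? (gP m)).isSome := by
      rw [List.find?_isSome]
      refine ⟨z0, hofFn σ z0, ?_⟩
      simp [gP, hz0]
      omega
    obtain ⟨y, hy⟩ := Option.isSome_iff_exists.1 h1
    have hwy : w σ = y := by rw [hwdef]; simp [hy]
    have hsm : (y : ℕ) < m := by
      have := List.find?_some hy
      simpa [gP] using this
    rw [hwy]
    exact ⟨hy, hsm⟩
  have hALG : ∀ σ : Equiv.Perm (Fin n), greedyALG m σ = B ∪ {w σ} := by
    intro σ
    rw [greedy_eq hm σ, hbigs σ]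
    congr 1
    unfold fsm
    rw [(hfind σ).1]
    rfl
  -- the identity's winner is z0
  have hw1 : w (1 : Equiv.Perm (Fin n)) = z0 := by
    have hid : ⇑(1 : Equiv.Perm (Fin n)) = id := rfl
    rw [hwdef]
    simp only [hid, List.ofFn_id, find?_finRange_zero hm hpos]
    rfl
  have hz0B : z0 ∉ B := by
    simp only [hB, Finset.mem_filter, Finset.mem_univ, true_and]
    show ¬ m ≤ (0 : ℕ)
    omega
  have hwB : ∀ σ, Disjoint B {w σ} := by
    intro σ
    rw [Finset.disjoint_singleton_right]
    simp only [hB, Finset.mem_filter, Finset.mem_univ, true_and]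
    have := (hfind σ).2
    omega
  -- cardinalities
  have hcardB : B.card = m - 1 := by
    have h := Finset.card_nbij (s := B) (t := Finset.range (m - 1))
      (fun x => (x : ℕ) - m)
      (fun a ha => by
        have ha' : m ≤ (a : ℕ) := by simpa [hB] using ha
        have h2 := a.isLt
        have h3 : (a : ℕ) - m < m - 1 := by omega
        simpa using h3)
      (fun a ha b hb hab => by
        have ha' : m ≤ (a : ℕ) := by simpa [hB] using ha
        have hb' : m ≤ (b : ℕ) := by simpa [hB] using hb
        have hab' : (a : ℕ) - m = (b : ℕ) - m := hab
        exact Fin.ext (by omega))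
      (fun k hk => by
        have hk' : k < m - 1 := by simpa using hk
        refine ⟨⟨k + m, by omega⟩, ?_, ?_⟩
        · simp only [Finset.mem_coe, hB, Finset.mem_filter, Finset.mem_univ, true_and]
          show m ≤ k + m
          omega
        · show k + m - m = k
          omega)
    rw [h, Finset.card_range]
  set S0 : Finset (Fin n) := Finset.univ.filter (fun x => (x : ℕ) < m) with hS0
  have hcardS0 : S0.card = m := by
    have h := Finset.card_nbij (s := S0) (t := Finset.range m)
      (fun x => (x : ℕ))
      (fun a ha => by
        have ha' : (a : ℕ) < m := by simpa [hS0] using ha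
        simpa using ha')
      (fun a ha b hb hab => Fin.ext hab)
      (fun k hk => by
        have hk' : k < m := by simpa using hk
        refine ⟨⟨k, by omega⟩, ?_, rfl⟩
        simp only [Finset.mem_coe, hS0, Finset.mem_filter, Finset.mem_univ, true_and]
        show k < m
        omega)
    rw [h, Finset.card_range]
  -- counting lemma
  set N : ℕ := (Finset.univ.filter (fun σ : Equiv.Perm (Fin n) => w σ = z0)).card with hN
  have hfiber : ∀ j ∈ S0, (Finset.univ.filter (fun σ : Equiv.Perm (Fin n) => w σ = j)).card = N := by
    intro j hj
    have hjm : (j : ℕ) < m := by simpa [hS0] using hj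
    set τ : Equiv.Perm (Fin n) := Equiv.swap z0 j with hτ
    have hgpτ : gP m ∘ ⇑τ = gP (n := n) m := by
      funext x
      simp only [Function.comp_apply, gP, decide_eq_decide]
      rcases eq_or_ne x z0 with rfl | hx0
      · rw [hτ, Equiv.swap_apply_left]; simp [hz0]; omega
      · rcases eq_or_ne x j with rfl | hxj
        · rw [hτ, Equiv.swap_apply_right]; simp [hz0]; omega
        · rw [hτ, Equiv.swap_apply_of_ne_of_ne hx0 hxj]
    have hwτ : ∀ σ : Equiv.Perm (Fin n), w (τ * σ) = τ (w σ) := by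
      intro σ
      have hlist : List.ofFn ⇑(τ * σ) = (List.ofFn ⇑σ).map ⇑τ := by
        rw [List.map_ofFn]
        rfl
      have : (List.ofFn ⇑(τ * σ)).find? (gP m) = some (τ (w σ)) := by
        rw [hlist, List.find?_map, hgpτ, (hfind σ).1]
        rfl
      rw [hwdef]
      simp only [this, Option.getD_some]
      rfl
    symm
    apply Finset.card_nbij (i := fun σ => τ * σ)
    · intro σ hσ
      simp only [Finset.mem_coe, Finset.mem_filter, Finset.mem_univ, true_and] at hσ ⊢
      rw [hwτ, hσ, hτ, Equiv.swap_apply_left]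
    · intro a _ b _ hab
      exact mul_left_cancel hab
    · intro σ' hσ'
      simp only [Finset.mem_coe, Finset.mem_filter, Finset.mem_univ, true_and] at hσ'
      refine ⟨τ * σ', ?_, ?_⟩
      · simp only [Finset.mem_coe, Finset.mem_filter, Finset.mem_univ, true_and]
        rw [hwτ, hσ', hτ, Equiv.swap_apply_right]
      · show τ * (τ * σ') = σ'
        rw [← mul_assoc, hτ, Equiv.swap_mul_self, one_mul]
  have hcount : m * N = Fintype.card (Equiv.Perm (Fin n)) := by
    have h1 : (Finset.univ : Finset (Equiv.Perm (Fin n))).card =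
        ∑ j ∈ S0, (Finset.univ.filter (fun σ : Equiv.Perm (Fin n) => w σ = j)).card :=
      Finset.card_eq_sum_card_fiberwise (fun σ _ => by
        simp only [hS0, Finset.mem_coe, Finset.mem_filter, Finset.mem_univ, true_and]
        exact (hfind σ).2)
    rw [← Finset.card_univ, h1, Finset.sum_congr rfl hfiber, Finset.sum_const, hcardS0,
      smul_eq_mul]
  -- intersection cardinalities
  have hitecard : ∀ σ : Equiv.Perm (Fin n),
      ({w σ} ∩ ({z0} : Finset (Fin n))).card = if w σ = z0 then 1 else 0 := by
    intro σ
    split_ifs with h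
    · rw [h]; simp
    · rw [Finset.singleton_inter_of_notMem (by simp [h])]; simp
  have hinter1 : ∀ σ : Equiv.Perm (Fin n),
      (greedyALG m σ ∩ greedyALG m (1 : Equiv.Perm (Fin n))).card =
        (m - 1) + (if w σ = z0 then 1 else 0) := by
    intro σ
    rw [hALG σ, hALG 1, hw1]
    have : (B ∪ {w σ}) ∩ (B ∪ {z0}) = B ∪ ({w σ} ∩ {z0}) := by
      ext x; simp; tauto
    rw [this, Finset.card_union_of_disjoint
      (Finset.disjoint_of_subset_right Finset.inter_subset_left (hwB σ)), hcardB, hitecard]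
  have htop : topk n 1 = ({z0} : Finset (Fin n)) := by
    ext x
    simp only [topk, Finset.mem_filter, Finset.mem_univ, true_and, Finset.mem_singleton]
    rw [Fin.ext_iff]
    show (x : ℕ) < 1 ↔ (x : ℕ) = (0 : ℕ)
    omega
  have hBz0 : B ∩ ({z0} : Finset (Fin n)) = ∅ := by
    ext x
    simp only [Finset.mem_inter, Finset.mem_singleton, Finset.notMem_empty, iff_false,
      not_and]
    rintro hx rfl
    exact hz0B hx
  have hinter2 : ∀ σ : Equiv.Perm (Fin n),
      (greedyALG m σ ∩ topk n 1).card = if w σ = z0 then 1 else 0 := by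
    intro σ
    rw [hALG σ, htop, Finset.union_inter_distrib_right, hBz0, Finset.empty_union,
      hitecard σ]
  -- OPT cardinalities
  have hOPTcard : (greedyALG m (1 : Equiv.Perm (Fin n))).card = m := by
    rw [hALG 1, hw1, Finset.card_union_of_disjoint (Finset.disjoint_singleton_right.2 hz0B),
      hcardB, Finset.card_singleton]
    omega
  have hOPTtop : (greedyALG m (1 : Equiv.Perm (Fin n)) ∩ topk n 1).card = 1 := by
    rw [hALG 1, hw1, htop, Finset.union_inter_distrib_right, hBz0, Finset.empty_union,
      Finset.inter_self, Finset.card_singleton]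
  -- real number setup
  set F : ℝ := (Fintype.card (Equiv.Perm (Fin n)) : ℝ) with hF
  have hFpos : (0 : ℝ) < F := by
    rw [hF]
    exact_mod_cast Fintype.card_pos
  have hkey : (m : ℝ) * (N : ℝ) = F := by
    rw [hF]
    exact_mod_cast hcount
  have hmR : (1 : ℝ) ≤ (m : ℝ) := by exact_mod_cast hm
  have hmpos : (0 : ℝ) < (m : ℝ) := by linarith
  have hNnn : (0 : ℝ) ≤ (N : ℝ) := Nat.cast_nonneg _
  -- the sums
  have hsumboole : ∑ σ : Equiv.Perm (Fin n), (if w σ = z0 then (1 : ℝ) else 0) = (N : ℝ) := by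
    rw [Finset.sum_boole, hN]
  have hsum1 : ∑ σ : Equiv.Perm (Fin n),
      ((greedyALG m σ ∩ greedyALG m (1 : Equiv.Perm (Fin n))).card : ℝ) =
      ((m : ℝ) - 1) * F + (N : ℝ) := by
    have : ∀ σ : Equiv.Perm (Fin n),
        ((greedyALG m σ ∩ greedyALG m (1 : Equiv.Perm (Fin n))).card : ℝ) =
        ((m : ℝ) - 1) + (if w σ = z0 then (1 : ℝ) else 0) := by
      intro σ
      rw [hinter1 σ]
      push_cast [apply_ite (Nat.cast : ℕ → ℝ)]
      have : ((m - 1 : ℕ) : ℝ) = (m : ℝ) - 1 := by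
        have : (1 : ℕ) ≤ m := hm
        push_cast [this]
        ring
      rw [this]
    rw [Finset.sum_congr rfl (fun σ _ => this σ), Finset.sum_add_distrib, hsumboole,
      Finset.sum_const, Finset.card_univ, nsmul_eq_mul, hF]
    ring
  have hsum2 : ∑ σ : Equiv.Perm (Fin n), ((greedyALG m σ ∩ topk n 1).card : ℝ) = (N : ℝ) := by
    have : ∀ σ : Equiv.Perm (Fin n),
        ((greedyALG m σ ∩ topk n 1).card : ℝ) = (if w σ = z0 then (1 : ℝ) else 0) := by
      intro σ
      rw [hinter2 σ]
      split_ifs <;> simp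
    rw [Finset.sum_congr rfl (fun σ _ => this σ), hsumboole]
  constructor
  · rw [hOPTcard, hsum1]
    have expand : (1 + 1 / (m : ℝ)) * ((((m : ℝ) - 1) * F + (N : ℝ)) / F) =
        (((m : ℝ) + 1) * (((m : ℝ) - 1) * F + (N : ℝ))) / ((m : ℝ) * F) := by
      field_simp
    rw [expand, le_div_iff₀ (by positivity)]
    nlinarith [hkey, hNnn, hmR, hFpos]
  · rw [hOPTtop, hsum2, ← hkey, Nat.cast_one]
    rcases eq_or_lt_of_le hNnn with h0 | h0
    · exfalso
      rw [← h0, mul_zero] at hkey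
      linarith [hkey ▸ hFpos]
    · field_simp
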